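/- arXiv:2509.10521 — 3 statements merged into one kernel-verified Lean document; each statement's English description precedes it below -/
import Mathlib

section
/- Let E be a finite-dimensional real inner product space (e.g. EuclideanSpace ℝ (Fin n)), let A : E → ℝ be convex and differentiable, and define its Bregman divergence D_A(x, y) = A(x) − A(y) − ⟪∇A(y), x − y⟫. Let η₁, …, η_K ∈ E and weights w₁, …, w_K ≥ 0 with W = ∑ₖ wₖ > 0. If η⋆ ∈ E satisfies the moment-matching condition ∇A(η⋆) = (1/W) ∑ₖ wₖ • ∇A(ηₖ), then η⋆ globally minimizes the weighted Bregman objective: for every η ∈ E, ∑ₖ wₖ D_A(η⋆, ηₖ) ≤ ∑ₖ wₖ D_A(η, ηₖ). -/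
open RealInnerProductSpace

/-- Bregman divergence of a differentiable function `A` on a real inner product space:
`D_A(x, y) = A x - A y - ⟪∇A(y), x - y⟫`. -/
noncomputable def bregman {E : Type*} [NormedAddCommGroup E] [InnerProductSpace ℝ E] [CompleteSpace E]
    (A : E → ℝ) (x y : E) : ℝ :=
  A x - A y - ⟪gradient A y, x - y⟫

lemma inner_gradient_eq_fderiv {E : Type*} [NormedAddCommGroup E] [InnerProductSpace ℝ E]
    [CompleteSpace E] (A : E → ℝ) (x v : E) :
    ⟪gradient A x, v⟫ = fderiv ℝ A x v := by
  simp [gradient, InnerProductSpace.toDual_symm_apply]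

/-- Gradient inequality for convex differentiable functions. -/
lemma convex_gradient_ineq {E : Type*} [NormedAddCommGroup E] [InnerProductSpace ℝ E]
    [CompleteSpace E] (A : E → ℝ) (hA_convex : ConvexOn ℝ Set.univ A)
    (hA_diff : Differentiable ℝ A) (x y : E) :
    A x + ⟪gradient A x, y - x⟫ ≤ A y := by
  set g : ℝ → ℝ := fun t => A (x + t • (y - x)) with hg
  have hφ : ∀ t : ℝ, HasDerivAt (fun t : ℝ => x + t • (y - x)) (y - x) t := by
    intro t
    simpa using ((hasDerivAt_id t).smul_const (y - x)).const_add x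
  have hgc : ConvexOn ℝ Set.univ g := by
    refine ⟨convex_univ, ?_⟩
    intro a _ b _ p q hp hq hpq
    have := hA_convex.2 (Set.mem_univ (x + a • (y - x))) (Set.mem_univ (x + b • (y - x)))
      hp hq hpq
    have hcomb : p • (x + a • (y - x)) + q • (x + b • (y - x))
        = x + (p * a + q * b) • (y - x) := by
      rw [smul_add, smul_add, smul_smul, smul_smul]
      rw [add_add_add_comm, ← add_smul, ← add_smul, hpq, one_smul]
    rw [hcomb] at this
    simpa [hg] using this
  have hgd : HasDerivAt g (fderiv ℝ A x (y - x)) 0 := by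
    have := (hA_diff (x + (0:ℝ) • (y - x))).hasFDerivAt.comp_hasDerivAt 0 (hφ 0)
    simp only [zero_smul, add_zero] at this; exact this
  have hslope : fderiv ℝ A x (y - x) ≤ slope g 0 1 := by
    refine hgc.le_slope_of_hasDerivWithinAt (Set.mem_univ 0) (Set.mem_univ 1) one_pos
      (hgd.hasDerivWithinAt)
  rw [slope_def_field] at hslope
  have hg0 : g 0 = A x := by simp [hg]
  have hg1 : g 1 = A y := by simp [hg]
  rw [hg0, hg1] at hslope
  rw [inner_gradient_eq_fderiv]
  linarith [hslope]

/-- Sufficiency half of information projection by moment matching: if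
`∇A(η⋆)` equals the weighted average of the `∇A(ηₖ)`, then `η⋆` globally minimizes
`η ↦ ∑ₖ wₖ D_A(η, ηₖ)`. -/
theorem moment_matching_minimizes_weighted_bregman
    {E : Type*} [NormedAddCommGroup E] [InnerProductSpace ℝ E] [FiniteDimensional ℝ E]
    (A : E → ℝ) (hA_convex : ConvexOn ℝ Set.univ A) (hA_diff : Differentiable ℝ A)
    (K : ℕ) (η : Fin K → E) (w : Fin K → ℝ) (hw : ∀ k, 0 ≤ w k)
    (hW : 0 < ∑ k, w k)
    (ηstar : E)
    (hmm : gradient A ηstar = (∑ k, w k)⁻¹ • ∑ k, w k • gradient A (η k)) :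
    ∀ η' : E, ∑ k, w k * bregman A ηstar (η k) ≤ ∑ k, w k * bregman A η' (η k) := by
  intro η'
  set W := ∑ k, w k with hWdef
  have hsum : ∑ k, w k • gradient A (η k) = W • gradient A ηstar := by
    rw [hmm, smul_smul, mul_inv_cancel₀ hW.ne', one_smul]
  rw [← sub_nonneg, ← Finset.sum_sub_distrib]
  have hterm : ∀ k, w k * bregman A η' (η k) - w k * bregman A ηstar (η k)
      = w k * (A η' - A ηstar) - ⟪w k • gradient A (η k), η' - ηstar⟫ := by
    intro k
    simp only [bregman, real_inner_smul_left]
    have h1 : (⟪gradient A (η k), η' - ηstar⟫ : ℝ)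
        = ⟪gradient A (η k), η' - η k⟫ - ⟪gradient A (η k), ηstar - η k⟫ := by
      rw [← inner_sub_right]; congr 1; abel
    rw [h1]; ring
  simp only [hterm]
  rw [Finset.sum_sub_distrib, ← sum_inner, hsum, real_inner_smul_left,
    ← Finset.sum_mul, ← hWdef, ← mul_sub]
  refine mul_nonneg hW.le ?_
  have := convex_gradient_ineq A hA_convex hA_diff ηstar η'
  linarith
end

section
/- Let E be a finite-dimensional real inner product space, let A : E → ℝ be convex and differentiable, with Bregman divergence D_A(x, y) = A(x) − A(y) − ⟪∇A(y), x − y⟫. Let η₁, …, η_K ∈ E and weights w₁, …, w_K ≥ 0 with W = ∑ₖ wₖ > 0. If η⋆ ∈ E is a global minimizer of the function F(η) = ∑ₖ wₖ D_A(η, ηₖ) over E, then ∇A(η⋆) = (1/W) ∑ₖ wₖ • ∇A(ηₖ); i.e., every minimizer is moment-matched: its mean parameter ∇A(η⋆) equals the weighted average of the clients' mean parameters ∇A(ηₖ). -/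
open RealInnerProductSpace

/-- Necessity half of information projection by moment matching: every global minimizer
of `η ↦ ∑ₖ wₖ D_A(η, ηₖ)` satisfies `∇A(η⋆) = (1/W) ∑ₖ wₖ • ∇A(ηₖ)`. -/
theorem minimizer_of_weighted_bregman_is_moment_matched
    {E : Type*} [NormedAddCommGroup E] [InnerProductSpace ℝ E] [FiniteDimensional ℝ E]
    (A : E → ℝ) (hA_convex : ConvexOn ℝ Set.univ A) (hA_diff : Differentiable ℝ A)
    (K : ℕ) (η : Fin K → E) (w : Fin K → ℝ) (hw : ∀ k, 0 ≤ w k)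
    (hW : 0 < ∑ k, w k)
    (ηstar : E)
    (hmin : ∀ η' : E, ∑ k, w k * bregman A ηstar (η k) ≤ ∑ k, w k * bregman A η' (η k)) :
    gradient A ηstar = (∑ k, w k)⁻¹ • ∑ k, w k • gradient A (η k) := by
  classical
  set T : E → (E →L[ℝ] ℝ) := fun y => InnerProductSpace.toDual ℝ E (gradient A y) with hT
  have hgrad : ∀ y : E, HasFDerivAt A (T y) y := fun y =>
    (hA_diff y).hasGradientAt.hasFDerivAt
  have hDk : ∀ k : Fin K, HasFDerivAt (fun x => w k * bregman A x (η k))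
      (w k • (T ηstar - T (η k))) ηstar := by
    intro k
    have hc : HasFDerivAt (fun x : E => ⟪gradient A (η k), x - η k⟫) (T (η k)) ηstar := by
      have h0 : HasFDerivAt (fun x : E => (T (η k)) x) (T (η k)) ηstar :=
        (T (η k)).hasFDerivAt
      have : HasFDerivAt (fun x : E => (T (η k)) x - ⟪gradient A (η k), η k⟫) (T (η k)) ηstar :=
        h0.sub_const _
      convert this using 2 with x
      simp [hT, InnerProductSpace.toDual_apply_apply, inner_sub_right]
    have h1 : HasFDerivAt (fun x => bregman A x (η k)) (T ηstar - T (η k)) ηstar := by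
      unfold bregman
      exact ((hgrad ηstar).sub_const (A (η k))).sub hc
    exact h1.const_mul (w k)
  have hF : HasFDerivAt (fun x => ∑ k, w k * bregman A x (η k))
      (∑ k, w k • (T ηstar - T (η k))) ηstar := HasFDerivAt.fun_sum (fun k _ => hDk k)
  have hloc : IsLocalMin (fun x => ∑ k, w k * bregman A x (η k)) ηstar :=
    Filter.Eventually.of_forall hmin
  have hzero : (∑ k, w k • (T ηstar - T (η k))) = 0 := hloc.hasFDerivAt_eq_zero hF
  have hsum : (∑ k, w k) • T ηstar = ∑ k, w k • T (η k) := by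
    have := hzero
    simp only [smul_sub, Finset.sum_sub_distrib, sub_eq_zero, ← Finset.sum_smul] at this
    exact this
  have hinj := (InnerProductSpace.toDual ℝ E).injective
  have key : (∑ k, w k) • gradient A ηstar = ∑ k, w k • gradient A (η k) := by
    apply hinj
    simpa [hT, map_smul, map_sum] using hsum
  have hW' : (∑ k, w k) ≠ 0 := hW.ne'
  rw [← key, smul_smul, inv_mul_cancel₀ hW', one_smul]
end

section
/- Let m₁, …, m_K ∈ ℝ, v₁, …, v_K > 0, and weights w₁, …, w_K ≥ 0 with W = ∑ₖ wₖ > 0. Define the moment-matched parameters m⋆ = (1/W) ∑ₖ wₖ · mₖ and v⋆ = (1/W) ∑ₖ wₖ · (vₖ + (mₖ − m⋆)²). Then v⋆ > 0, and for all m ∈ ℝ and v > 0, ∑ₖ wₖ · klDiv (gaussianReal mₖ vₖ) (gaussianReal m⋆ v⋆) ≤ ∑ₖ wₖ · klDiv (gaussianReal mₖ vₖ) (gaussianReal m v). That is, within the two-parameter Gaussian family, the weighted sum of reverse KL divergences from the client distributions N(mₖ, vₖ) is minimized exactly at the Gaussian whose first and second moments equal the weighted averages of the clients' first and second moments. -/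
open MeasureTheory ProbabilityTheory Classical

/-- Kullback–Leibler divergence between two measures, as an extended real number:
`∫ llr μ ν dμ` when `μ ≪ ν` and the log-likelihood ratio is integrable, `⊤` otherwise. -/
noncomputable def klDiv {α : Type*} [MeasurableSpace α] (μ ν : Measure α) : EReal :=
  if μ ≪ ν ∧ Integrable (llr μ ν) μ then ((∫ x, llr μ ν x ∂μ : ℝ) : EReal) else ⊤

section helpers
open Real
open MeasureTheory ProbabilityTheory Real

lemma myintegral_comp_neg (f : ℝ → ℝ) : ∫ x, f (-x) = ∫ x, f x := by
  have h := (Homeomorph.neg ℝ).measurableEmbedding.integral_map (μ := (volume : Measure ℝ)) f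
  have hc : ⇑(Homeomorph.neg ℝ) = fun x : ℝ => -x := rfl
  rw [hc, show Measure.map (fun x : ℝ => -x) (volume : Measure ℝ) = volume from
    Measure.map_neg_eq_self _] at h
  exact h.symm

lemma myintegral_odd {b : ℝ} (hb : 0 < b) : ∫ x : ℝ, x * exp (-b * x ^ 2) = 0 := by
  have h := myintegral_comp_neg (fun x => x * exp (-b * x ^ 2))
  simp only [neg_sq, neg_mul] at h
  rw [integral_neg] at h
  simp only [neg_mul] at h ⊢
  linarith

lemma myintegrable_sq {b : ℝ} (hb : 0 < b) :
    Integrable (fun x : ℝ => x ^ 2 * exp (-b * x ^ 2)) := by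
  have h := integrable_rpow_mul_exp_neg_mul_sq hb (by norm_num : (-1:ℝ) < 2)
  have : ∀ x : ℝ, x ^ (2:ℝ) = x ^ 2 := fun x => by
    rw [show (2:ℝ) = ((2:ℕ):ℝ) by norm_num, Real.rpow_natCast]
  simpa [this] using h

lemma myintegral_sq {b : ℝ} (hb : 0 < b) :
    ∫ x : ℝ, x ^ 2 * exp (-b * x ^ 2) = (√π / 2) * b ^ (-(3:ℝ)/2) := by
  have habs := integral_comp_abs (f := fun x : ℝ => x ^ 2 * exp (-b * x ^ 2))
  simp only [sq_abs] at habs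
  rw [habs]
  have h := integral_rpow_mul_exp_neg_mul_rpow (p := 2) (q := 2) (b := b)
      (by norm_num) (by norm_num) hb
  have h2 : ∀ x ∈ Set.Ioi (0:ℝ), x ^ (2:ℝ) * exp (-b * x ^ (2:ℝ)) = x ^ 2 * exp (-b * x ^ 2) := by
    intro x hx
    rw [show (2:ℝ) = ((2:ℕ):ℝ) by norm_num, Real.rpow_natCast]
  rw [setIntegral_congr_fun measurableSet_Ioi h2] at h
  rw [h]
  rw [show ((2:ℝ)+1)/2 = 1/2 + 1 by norm_num, Real.Gamma_add_one (by norm_num),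
    Real.Gamma_one_half_eq]
  ring_nf

open scoped NNReal ENNReal

section moments
variable {m : ℝ} {v : ℝ≥0}

lemma mygauss_integral (hv : v ≠ 0) (g : ℝ → ℝ) :
    ∫ x, g x ∂(gaussianReal m v) = ∫ x, gaussianPDFReal m v x * g x := by
  rw [gaussianReal_of_var_ne_zero _ hv]
  have hd : gaussianPDF m v = fun x => ((Real.toNNReal (gaussianPDFReal m v x) : ℝ≥0) : ℝ≥0∞) :=
    rfl
  rw [hd, integral_withDensity_eq_integral_smul
    ((measurable_gaussianPDFReal m v).real_toNNReal) g]
  congr 1 with x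
  simp [NNReal.smul_def, Real.coe_toNNReal _ (gaussianPDFReal_nonneg m v x)]

lemma mygauss_integrable (hv : v ≠ 0) {g : ℝ → ℝ}
    (hg : Integrable (fun x => gaussianPDFReal m v x * g x)) :
    Integrable g (gaussianReal m v) := by
  rw [gaussianReal_of_var_ne_zero _ hv]
  have hd : gaussianPDF m v = fun x => ((Real.toNNReal (gaussianPDFReal m v x) : ℝ≥0) : ℝ≥0∞) :=
    rfl
  rw [hd, integrable_withDensity_iff_integrable_smul
    ((measurable_gaussianPDFReal m v).real_toNNReal)]
  refine hg.congr (Filter.Eventually.of_forall fun x => ?_)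
  simp [NNReal.smul_def, Real.coe_toNNReal _ (gaussianPDFReal_nonneg m v x)]

lemma my_rpow_fact {v : ℝ≥0} (hv : v ≠ 0) :
    ((2*(v:ℝ))⁻¹) ^ (-(3:ℝ)/2) = (2*(v:ℝ)) * √(2*(v:ℝ)) := by
  have hpos : (0:ℝ) < 2*(v:ℝ) := by positivity
  rw [Real.inv_rpow hpos.le, show (-(3:ℝ)/2) = -((3:ℝ)/2) by ring,
    Real.rpow_neg hpos.le, inv_inv, show (3:ℝ)/2 = 1 + 1/2 by norm_num,
    Real.rpow_add hpos, Real.rpow_one, ← Real.sqrt_eq_rpow]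

lemma mygauss_sq (hv : v ≠ 0) (a : ℝ) :
    Integrable (fun x => (x - a)^2) (gaussianReal m v) ∧
    ∫ x, (x - a)^2 ∂(gaussianReal m v) = v + (m - a)^2 := by
  have hvpos : (0:ℝ) < v := by positivity
  set b : ℝ := (2*(v:ℝ))⁻¹ with hbdef
  have hb : 0 < b := by positivity
  set c : ℝ := (√(2*π*(v:ℝ)))⁻¹ with hcdef
  set F : ℝ → ℝ := fun t => c*(t^2*exp (-b*t^2)) + (2*(m-a)*c)*(t*exp (-b*t^2))
      + ((m-a)^2*c)*exp (-b*t^2) with hF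
  have hpdf : (fun x => gaussianPDFReal m v x * (x - a)^2) = fun x => F (x - m) := by
    funext x
    simp only [hF, gaussianPDFReal, hcdef, hbdef]
    rw [show -(x-m)^2/(2*(v:ℝ)) = -(2*(v:ℝ))⁻¹*(x-m)^2 by ring]
    ring
  have hi2 : Integrable (fun t : ℝ => c*(t^2*exp (-b*t^2))) := (myintegrable_sq hb).const_mul c
  have hi1 : Integrable (fun t : ℝ => (2*(m-a)*c)*(t*exp (-b*t^2))) :=
    (integrable_mul_exp_neg_mul_sq hb).const_mul _
  have hi0 : Integrable (fun t : ℝ => ((m-a)^2*c)*exp (-b*t^2)) :=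
    (integrable_exp_neg_mul_sq hb).const_mul _
  have hi21 : Integrable (fun t : ℝ => c*(t^2*exp (-b*t^2)) + (2*(m-a)*c)*(t*exp (-b*t^2))) :=
    hi2.add hi1
  have hFint : Integrable F := hi21.add hi0
  constructor
  · exact mygauss_integrable hv (by rw [hpdf]; exact hFint.comp_sub_right m)
  · rw [mygauss_integral hv, hpdf, integral_sub_right_eq_self F m, hF]
    rw [integral_add hi21 hi0, integral_add hi2 hi1]
    rw [integral_const_mul, integral_const_mul, integral_const_mul,
      myintegral_sq hb, myintegral_odd hb, integral_gaussian]
    rw [hbdef, my_rpow_fact hv]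
    have h1 : π / (2*(v:ℝ))⁻¹ = 2*π*(v:ℝ) := by field_simp
    rw [h1]
    have h2 : √(2*π*(v:ℝ)) = √π * √(2*(v:ℝ)) := by
      rw [← Real.sqrt_mul pi_pos.le]; ring_nf
    have h3 : (0:ℝ) < √(2*(v:ℝ)) := Real.sqrt_pos.mpr (by positivity)
    have h4 : (0:ℝ) < √π := Real.sqrt_pos.mpr pi_pos
    rw [hcdef, h2]
    field_simp
    ring

end moments

lemma klDiv_gaussianReal (m₁ m₂ : ℝ) (v₁ v₂ : ℝ≥0) (h₁ : v₁ ≠ 0) (h₂ : v₂ ≠ 0) :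
    klDiv (gaussianReal m₁ v₁) (gaussianReal m₂ v₂)
      = ((Real.log ((v₂:ℝ)/(v₁:ℝ)) / 2 + ((v₁:ℝ) + (m₁-m₂)^2) / (2*(v₂:ℝ)) - 1/2 : ℝ) : EReal) := by
  set μ := gaussianReal m₁ v₁ with hμ
  set ν := gaussianReal m₂ v₂ with hν
  have hv₁ : (0:ℝ) < v₁ := by positivity
  have hv₂ : (0:ℝ) < v₂ := by positivity
  have hac : μ ≪ ν :=
    (gaussianReal_absolutelyContinuous m₁ h₁).trans (gaussianReal_absolutelyContinuous' m₂ h₂)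
  set g : ℝ → ℝ := fun x =>
    Real.log ((v₂:ℝ)/(v₁:ℝ)) / 2 + (x-m₂)^2/(2*(v₂:ℝ)) - (x-m₁)^2/(2*(v₁:ℝ)) with hg
  -- rnDeriv identification
  have hrn : μ.rnDeriv ν =ᵐ[volume]
      fun x => (gaussianPDF m₂ v₂ x)⁻¹ * gaussianPDF m₁ v₁ x := by
    have h1 := MeasureTheory.Measure.rnDeriv_withDensity_right μ volume
      (measurable_gaussianPDF m₂ v₂).aemeasurable
      (ae_of_all _ fun x => (gaussianPDF_pos m₂ h₂ x).ne')
      (ae_of_all _ fun _ => ENNReal.ofReal_ne_top)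
    rw [← gaussianReal_of_var_ne_zero m₂ h₂, ← hν] at h1
    have h2 := rnDeriv_gaussianReal m₁ v₁
    filter_upwards [h1, h2] with x hx1 hx2
    rw [hx1, hx2]
  have hllr : llr μ ν =ᵐ[μ] g := by
    have hrnμ : μ.rnDeriv ν =ᵐ[μ]
        fun x => (gaussianPDF m₂ v₂ x)⁻¹ * gaussianPDF m₁ v₁ x :=
      (gaussianReal_absolutelyContinuous m₁ h₁).ae_le hrn
    filter_upwards [hrnμ] with x hx
    have hp₁ : 0 < gaussianPDFReal m₁ v₁ x := gaussianPDFReal_pos _ _ _ h₁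
    have hp₂ : 0 < gaussianPDFReal m₂ v₂ x := gaussianPDFReal_pos _ _ _ h₂
    rw [llr, hx]
    rw [gaussianPDF, gaussianPDF, ENNReal.toReal_mul, ENNReal.toReal_inv,
      ENNReal.toReal_ofReal hp₁.le, ENNReal.toReal_ofReal hp₂.le]
    rw [show (gaussianPDFReal m₂ v₂ x)⁻¹ * gaussianPDFReal m₁ v₁ x
        = gaussianPDFReal m₁ v₁ x / gaussianPDFReal m₂ v₂ x by ring]
    rw [Real.log_div hp₁.ne' hp₂.ne']
    rw [gaussianPDFReal, gaussianPDFReal]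
    have hs₁ : (0:ℝ) < √(2*π*(v₁:ℝ)) := Real.sqrt_pos.mpr (by positivity)
    have hs₂ : (0:ℝ) < √(2*π*(v₂:ℝ)) := Real.sqrt_pos.mpr (by positivity)
    rw [Real.log_mul (by positivity) (exp_ne_zero _),
      Real.log_mul (by positivity) (exp_ne_zero _), Real.log_exp, Real.log_exp,
      Real.log_inv, Real.log_inv, Real.log_sqrt (by positivity), Real.log_sqrt (by positivity)]
    have hlog : Real.log (2*π*(v₂:ℝ)) = Real.log (2*π*(v₁:ℝ)) + Real.log ((v₂:ℝ)/(v₁:ℝ)) := by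
      rw [← Real.log_mul (by positivity) (by positivity)]
      congr 1
      field_simp
    rw [hg]
    simp only
    rw [hlog]
    ring
  have i2 := (mygauss_sq (m := m₁) h₁ m₂)
  have i1 := (mygauss_sq (m := m₁) h₁ m₁)
  have i2e := i2.2
  have i1e := i1.2
  rw [← hμ] at i2e i1e
  have ic : Integrable (fun _ : ℝ => Real.log ((v₂:ℝ)/(v₁:ℝ)) / 2) μ := integrable_const _
  have j2 : Integrable (fun x : ℝ => (x-m₂)^2/(2*(v₂:ℝ))) μ := i2.1.div_const _
  have j1 : Integrable (fun x : ℝ => (x-m₁)^2/(2*(v₁:ℝ))) μ := i1.1.div_const _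
  have j12 : Integrable (fun x : ℝ => Real.log ((v₂:ℝ)/(v₁:ℝ)) / 2 + (x-m₂)^2/(2*(v₂:ℝ))) μ :=
    ic.add j2
  have hgint : Integrable g μ := j12.sub j1
  have hint : Integrable (llr μ ν) μ := hgint.congr hllr.symm
  rw [klDiv, if_pos ⟨hac, hint⟩, integral_congr_ae hllr]
  rw [hg]
  simp only
  rw [integral_sub j12 j1, integral_add ic j2, integral_div, integral_div, integral_div,
    i2e, i1e, integral_const]
  have hμuniv : μ.real Set.univ = 1 := by simp [hμ]
  rw [hμuniv, one_smul]
  congr 1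
  rw [sub_self m₁]
  field_simp
  ring

lemma my_EReal_coe_sum {K : ℕ} (f : Fin K → ℝ) :
    ((∑ k, f k : ℝ) : EReal) = ∑ k, ((f k : ℝ) : EReal) :=
  map_sum (⟨⟨Real.toEReal, EReal.coe_zero⟩, EReal.coe_add⟩ : ℝ →+ EReal) f Finset.univ

lemma my_scalar_ineq (W vs v' d : ℝ) (hW : 0 < W) (hvs : 0 < vs) (hv' : 0 < v') (hd : 0 ≤ d) :
    W * Real.log vs / 2 + (W * vs + W * 0) / (2 * vs)
      ≤ W * Real.log v' / 2 + (W * vs + W * d) / (2 * v') := by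
  have hlog : Real.log vs - Real.log v' ≤ vs / v' - 1 := by
    rw [← Real.log_div hvs.ne' hv'.ne']
    exact Real.log_le_sub_one_of_pos (div_pos hvs hv')
  have e1 : (W * vs + W * 0) / (2 * vs) = W / 2 := by
    rw [mul_zero, add_zero]
    field_simp
  have e2 : W * Real.log v' / 2 + (W * vs + W * d) / (2 * v')
      = (W * Real.log v' * v' + W * vs + W * d) / (2 * v') := by
    field_simp
    ring
  rw [e1, e2, le_div_iff₀ (by positivity)]
  have h1 : (W * v') * (Real.log vs - Real.log v') ≤ (W * v') * (vs / v' - 1) :=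
    mul_le_mul_of_nonneg_left hlog (by positivity)
  have hx2 : W * (vs / v') * v' = W * vs := by
    field_simp
  nlinarith [h1, hx2, mul_nonneg hW.le hd]

end helpers

/-- Two-parameter Gaussian instance of information projection by moment matching: the
moment-matched parameters `m⋆ = (1/W) ∑ₖ wₖ mₖ` and `v⋆ = (1/W) ∑ₖ wₖ (vₖ + (mₖ − m⋆)²)`
satisfy `v⋆ > 0` and minimize `(m, v) ↦ ∑ₖ wₖ · KL(N(mₖ, vₖ) ‖ N(m, v))` over `ℝ × (0, ∞)`. -/
theorem moment_matching_minimizes_weighted_kl_gaussian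
    (K : ℕ) (m v : Fin K → ℝ) (hv : ∀ k, 0 < v k)
    (w : Fin K → ℝ) (hw : ∀ k, 0 ≤ w k) (hW : 0 < ∑ k, w k)
    (mstar vstar : ℝ)
    (hmstar : mstar = (∑ k, w k)⁻¹ * ∑ k, w k * m k)
    (hvstar : vstar = (∑ k, w k)⁻¹ * ∑ k, w k * (v k + (m k - mstar) ^ 2)) :
    0 < vstar ∧
      ∀ (m' v' : ℝ), 0 < v' →
        ∑ k, (w k : EReal) *
            klDiv (gaussianReal (m k) (v k).toNNReal) (gaussianReal mstar vstar.toNNReal)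
          ≤ ∑ k, (w k : EReal) *
              klDiv (gaussianReal (m k) (v k).toNNReal) (gaussianReal m' v'.toNNReal) := by
  have hWne : (∑ k, w k) ≠ 0 := hW.ne'
  have hvs' : ∀ k, (v k).toNNReal ≠ 0 := fun k => (Real.toNNReal_pos.mpr (hv k)).ne'
  have hm0 : ∑ k, w k * (m k - mstar) = 0 := by
    have h1 : ∑ k, w k * (m k - mstar) = (∑ k, w k * m k) - (∑ k, w k) * mstar := by
      simp only [mul_sub]
      rw [Finset.sum_sub_distrib, ← Finset.sum_mul]
    rw [h1, hmstar, ← mul_assoc, mul_inv_cancel₀ hWne, one_mul, sub_self]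
  have hSvstar : ∑ k, w k * (v k + (m k - mstar)^2) = (∑ k, w k) * vstar := by
    rw [hvstar, ← mul_assoc, mul_inv_cancel₀ hWne, one_mul]
  have hS : ∀ a : ℝ, ∑ k, w k * (v k + (m k - a)^2)
      = (∑ k, w k) * vstar + (∑ k, w k) * (mstar - a)^2 := by
    intro a
    have key : ∀ k, w k * (v k + (m k - a)^2) =
        w k * (v k + (m k - mstar)^2) + (2*(mstar - a)) * (w k * (m k - mstar))
          + w k * (mstar - a)^2 := fun k => by ring
    rw [Finset.sum_congr rfl (fun k _ => key k), Finset.sum_add_distrib, Finset.sum_add_distrib,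
      ← Finset.mul_sum, hm0, mul_zero, add_zero, hSvstar, ← Finset.sum_mul]
  have hvspos : 0 < vstar := by
    obtain ⟨k0, hk0⟩ : ∃ k, 0 < w k := by
      by_contra h
      push_neg at h
      have hz : ∑ k, w k = 0 := Finset.sum_eq_zero (fun k _ => le_antisymm (h k) (hw k))
      exact hWne hz
    have hpos : 0 < ∑ k, w k * (v k + (m k - mstar)^2) := by
      refine Finset.sum_pos' (fun k _ => mul_nonneg (hw k) (add_nonneg (hv k).le (sq_nonneg _))) ?_
      refine ⟨k0, Finset.mem_univ k0, mul_pos hk0 ?_⟩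
      exact add_pos_of_pos_of_nonneg (hv k0) (sq_nonneg _)
    rw [hvstar]
    exact mul_pos (inv_pos.mpr hW) hpos
  refine ⟨hvspos, fun m' v' hv' => ?_⟩
  have hkl : ∀ (a b : ℝ), 0 < b → ∀ (k : Fin K),
      klDiv (gaussianReal (m k) (v k).toNNReal) (gaussianReal a b.toNNReal)
        = ((Real.log (b / v k)/2 + (v k + (m k - a)^2)/(2*b) - 1/2 : ℝ) : EReal) := by
    intro a b hb k
    rw [klDiv_gaussianReal (m k) a (v k).toNNReal b.toNNReal (hvs' k)
      (Real.toNNReal_pos.mpr hb).ne']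
    simp only [Real.coe_toNNReal _ (hv k).le, Real.coe_toNNReal _ hb.le]
  have trans : ∀ (a b : ℝ), 0 < b →
      ∑ k, (w k : EReal) * klDiv (gaussianReal (m k) (v k).toNNReal) (gaussianReal a b.toNNReal)
        = ((∑ k, w k * (Real.log (b / v k)/2 + (v k + (m k - a)^2)/(2*b) - 1/2) : ℝ) : EReal) := by
    intro a b hb
    rw [my_EReal_coe_sum]
    refine Finset.sum_congr rfl fun k _ => ?_
    rw [hkl a b hb k, ← EReal.coe_mul]
  rw [trans mstar vstar hvspos, trans m' v' hv', EReal.coe_le_coe_iff]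
  have expand : ∀ a b : ℝ, 0 < b →
      ∑ k, w k * (Real.log (b / v k)/2 + (v k + (m k - a)^2)/(2*b) - 1/2)
      = (∑ k, w k * (- Real.log (v k)/2 - 1/2)) + ((∑ k, w k) * Real.log b/2
          + ((∑ k, w k)*vstar + (∑ k, w k)*(mstar-a)^2)/(2*b)) := by
    intro a b hb
    have e : ∀ k, w k * (Real.log (b / v k)/2 + (v k + (m k - a)^2)/(2*b) - 1/2)
        = w k * (- Real.log (v k)/2 - 1/2)
          + (w k * Real.log b/2 + (w k * (v k + (m k - a)^2))/(2*b)) := by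
      intro k
      rw [Real.log_div hb.ne' (hv k).ne']
      ring
    rw [Finset.sum_congr rfl fun k _ => e k, Finset.sum_add_distrib]
    congr 1
    rw [Finset.sum_add_distrib, ← Finset.sum_div, ← Finset.sum_div, ← Finset.sum_mul, hS a]
  rw [expand mstar vstar hvspos, expand m' v' hv']
  refine add_le_add le_rfl ?_
  have hfin := my_scalar_ineq (∑ k, w k) vstar v' ((mstar - m')^2) hW hvspos hv' (sq_nonneg _)
  simp only [sub_self] at *
  rw [show ((0:ℝ)^2) = 0 by norm_num]
  exact hfin
end
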